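/- Let C be a set and H_k := ℓ²(C^k). Let F be a finite loopless graph (multiple edges allowed) and let h = (h_v)_{v∈V(F)} with h_v ∈ H_{deg(v)}^{S_{deg(v)}} for each v. Then the sum Σ_{φ:E(F)→C} ∏_{v∈V(F)} h_v(φ(δ(v))) converges absolutely, and its absolute value is at most ∏_{v∈V(F)} ‖h_v‖; in particular the partition function value π_F(h) is a well-defined real number. -/

import Mathlib

noncomputable section

/-- `H_k = ℓ²(C^k)`. -/
abbrev Hk (C : Type) (k : ℕ) : Type := lp (fun _ : (Fin k → C) => ℝ) 2

/-- `S_k`-invariance of an element of `H_k = ℓ²(C^k)`. -/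
def SkInv {C : Type} {k : ℕ} (h : Hk C k) : Prop :=
  ∀ (σ : Equiv.Perm (Fin k)) (c : Fin k → C), h (c ∘ σ) = h c



open Finset
open scoped ENNReal NNReal

noncomputable section Stmt17Aux


/-- Cauchy–Schwarz for `ℝ≥0∞`-valued tsum. -/
lemma aux_tsum_cs {C : Type} (f g : C → ℝ≥0∞) :
    ∑' c, f c * g c ≤ (∑' c, f c ^ (2:ℝ)) ^ (1/2 : ℝ) * (∑' c, g c ^ (2:ℝ)) ^ (1/2 : ℝ) := by
  letI : MeasurableSpace C := ⊤
  haveI : MeasurableSingletonClass C := ⟨fun _ => MeasurableSpace.measurableSet_top⟩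
  have hpq : Real.HolderConjugate 2 2 := Real.HolderConjugate.two_two
  have hf : Measurable f := fun s _ => MeasurableSpace.measurableSet_top
  have hg : Measurable g := fun s _ => MeasurableSpace.measurableSet_top
  have := ENNReal.lintegral_mul_le_Lp_mul_Lq MeasureTheory.Measure.count hpq
    hf.aemeasurable hg.aemeasurable
  simpa [MeasureTheory.lintegral_count] using this

variable {C E : Type} [Nonempty C] [DecidableEq E]

/-- Extend a function on a finset to the whole type using a junk value. -/
def extF (S : Finset E) (ψ : ↥S → C) : E → C :=
  fun e => if h : e ∈ S then ψ ⟨e, h⟩ else Classical.arbitrary C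

def splitEquiv (S : Finset E) (e : E) (he : e ∈ S) :
    (↥S → C) ≃ ((↥(S.erase e) → C) × C) where
  toFun ψ := (fun x => ψ ⟨x.1, Finset.mem_of_mem_erase x.2⟩, ψ ⟨e, he⟩)
  invFun p := fun x => if h : (x : E) = e then p.2
    else p.1 ⟨x.1, Finset.mem_erase.2 ⟨h, x.2⟩⟩
  left_inv ψ := by
    funext x
    rcases x with ⟨x, hx⟩
    dsimp only
    split
    · rename_i h; subst h; rfl
    · rfl
  right_inv p := by
    rcases p with ⟨ψ, c⟩
    refine Prod.ext ?_ ?_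
    · funext x
      rcases x with ⟨x, hx⟩
      dsimp only
      rw [dif_neg (Finset.mem_erase.mp hx).1]
    · dsimp only
      rw [dif_pos rfl]

lemma extF_split (S : Finset E) (e : E) (he : e ∈ S) (ψ : ↥(S.erase e) → C) (c : C) :
    extF S ((splitEquiv S e he).symm (ψ, c)) = Function.update (extF (S.erase e) ψ) e c := by
  funext x
  by_cases hx : x = e
  · subst hx
    simp [extF, splitEquiv, Function.update, he]
  · simp only [Function.update, extF, splitEquiv, Equiv.coe_fn_symm_mk]
    rw [dif_neg hx]
    by_cases hxS : x ∈ S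
    · rw [dif_pos hxS, dif_neg hx, dif_pos (Finset.mem_erase.mpr ⟨hx, hxS⟩)]
    · rw [dif_neg hxS, dif_neg (fun h => hxS (Finset.mem_of_mem_erase h))]

lemma rpow_half_sq (x : ℝ≥0∞) : (x ^ (1/2 : ℝ)) ^ (2:ℝ) = x := by
  rw [← ENNReal.rpow_mul]; norm_num

lemma sq_rpow_half (x : ℝ≥0∞) : (x ^ (2:ℝ)) ^ (1/2 : ℝ) = x := by
  rw [← ENNReal.rpow_mul]; norm_num

variable {V : Type} [Fintype E] [Fintype V] [DecidableEq V]

/-- The modified vertex function after summing out the coordinate `e`. -/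
def Gfun (F : V → (E → C) → ℝ≥0∞) (A : V → Finset E) (e : E) : V → (E → C) → ℝ≥0∞ :=
  fun v φ => if e ∈ A v then
      (∑' c : C, F v (Function.update φ e c) ^ (2:ℝ)) ^ (1/2 : ℝ)
    else F v φ

omit [Fintype E] in
lemma key : ∀ (n : ℕ) (F : V → (E → C) → ℝ≥0∞) (A : V → Finset E),
    (∀ v (φ ψ : E → C), (∀ e ∈ A v, φ e = ψ e) → F v φ = F v ψ) →
    (∀ e : E, e ∈ Finset.univ.biUnion A →
      (Finset.univ.filter (fun v => e ∈ A v)).card = 2) →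
    (∑ v, (A v).card) < n →
    ∑' ψ : (↥(Finset.univ.biUnion A) → C), ∏ v, F v (extF _ ψ)
      ≤ ∏ v, (∑' ψ : (↥(A v) → C), F v (extF _ ψ) ^ (2:ℝ)) ^ (1/2 : ℝ) := by
  intro n
  induction n with
  | zero => intro F A _ _ h; omega
  | succ n ih =>
    intro F A hdep hcov hlt
    by_cases hU : Finset.univ.biUnion A = ∅
    · -- base case : no active edges
      have hAv : ∀ v, A v = ∅ := fun v => Finset.eq_empty_iff_forall_notMem.mpr
        (fun e he => by
          have : e ∈ Finset.univ.biUnion A :=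
            Finset.mem_biUnion.mpr ⟨v, Finset.mem_univ v, he⟩
          rw [hU] at this
          exact absurd this (Finset.notMem_empty e))
      haveI h1 : IsEmpty ↥(Finset.univ.biUnion A) := Finset.isEmpty_coe_sort.mpr hU
      refine le_of_eq ?_
      rw [tsum_eq_single (default : ↥(Finset.univ.biUnion A) → C)
        (fun b hb => absurd (Subsingleton.elim b default) hb)]
      refine Finset.prod_congr rfl (fun v _ => ?_)
      haveI : IsEmpty ↥(A v) := Finset.isEmpty_coe_sort.mpr (hAv v)
      rw [tsum_eq_single (default : ↥(A v) → C)
        (fun b hb => absurd (Subsingleton.elim b default) hb), sq_rpow_half]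
      exact hdep v _ _ (by simp [hAv v])
    · -- inductive step
      obtain ⟨e, he⟩ := Finset.nonempty_of_ne_empty hU
      obtain ⟨a, b, hab, hfil⟩ := Finset.card_eq_two.mp (hcov e he)
      have hmem : ∀ v : V, e ∈ A v ↔ (v = a ∨ v = b) := fun v => by
        have := Finset.ext_iff.mp hfil v
        simpa using this
      have hea : e ∈ A a := (hmem a).mpr (Or.inl rfl)
      have heb : e ∈ A b := (hmem b).mpr (Or.inr rfl)
      set G := Gfun F A e with hG
      set A' : V → Finset E := fun v => (A v).erase e with hA'
      have hdep' : ∀ v (φ ψ : E → C), (∀ e' ∈ A' v, φ e' = ψ e') → G v φ = G v ψ := by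
        intro v φ ψ hag
        by_cases hv : e ∈ A v
        · simp only [hG, Gfun, if_pos hv]
          congr 1
          refine tsum_congr fun c => ?_
          congr 1
          refine hdep v _ _ fun e' he' => ?_
          by_cases h : e' = e
          · subst h; simp
          · rw [Function.update_of_ne h, Function.update_of_ne h]
            exact hag e' (Finset.mem_erase.mpr ⟨h, he'⟩)
        · simp only [hG, Gfun, if_neg hv]
          exact hdep v _ _ fun e' he' =>
            hag e' (Finset.mem_erase.mpr ⟨fun h : e' = e => hv (h ▸ he'), he'⟩)
      have hUe : Finset.univ.biUnion A' = (Finset.univ.biUnion A).erase e := by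
        ext x
        simp only [hA', Finset.mem_biUnion, Finset.mem_erase, Finset.mem_univ, true_and]
        tauto
      have hcov' : ∀ e' : E, e' ∈ Finset.univ.biUnion A' →
          (Finset.univ.filter (fun v => e' ∈ A' v)).card = 2 := by
        intro e' he'
        rw [hUe] at he'
        obtain ⟨hne, hmem'⟩ := Finset.mem_erase.mp he'
        rw [← hcov e' hmem']
        exact congrArg Finset.card (Finset.filter_congr (fun v _ => by
          simp [hA', Finset.mem_erase, hne]))
      have hlt' : (∑ v, (A' v).card) < n := by
        have h1 : (∑ v, (A' v).card) < ∑ v, (A v).card := by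
          refine Finset.sum_lt_sum (fun v _ => Finset.card_erase_le)
            ⟨a, Finset.mem_univ a, ?_⟩
          simp only [hA']
          rw [Finset.card_erase_of_mem hea]
          exact Nat.sub_lt (Finset.card_pos.mpr ⟨e, hea⟩) one_pos
        omega
      have hN : ∀ v, (∑' ψ : ↥(A' v) → C, G v (extF _ ψ) ^ (2:ℝ))
          = ∑' ψ : ↥(A v) → C, F v (extF _ ψ) ^ (2:ℝ) := by
        intro v
        by_cases hv : e ∈ A v
        · calc (∑' ψ : ↥(A' v) → C, G v (extF _ ψ) ^ (2:ℝ))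
              = ∑' (ψ : ↥((A v).erase e) → C), ∑' (c : C),
                  F v (Function.update (extF ((A v).erase e) ψ) e c) ^ (2:ℝ) := by
                refine tsum_congr fun ψ => ?_
                simp only [hG, Gfun, if_pos hv, hA']
                rw [rpow_half_sq]
            _ = ∑' (p : (↥((A v).erase e) → C) × C),
                  F v (extF (A v) ((splitEquiv (A v) e hv).symm p)) ^ (2:ℝ) := by
                rw [ENNReal.tsum_prod']
                exact tsum_congr fun ψ => tsum_congr fun c => by rw [extF_split]
            _ = ∑' ψ : ↥(A v) → C, F v (extF _ ψ) ^ (2:ℝ) :=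
                Equiv.tsum_eq (splitEquiv (A v) e hv).symm
                  (fun ψ => F v (extF (A v) ψ) ^ (2:ℝ))
        · have hAe : A' v = A v := by
            simp only [hA']; exact Finset.erase_eq_of_notMem hv
          rw [hAe]
          exact tsum_congr fun ψ => by simp only [hG, Gfun, if_neg hv]
      -- the Cauchy–Schwarz step
      have hsplitprod : ∀ (H : V → ℝ≥0∞),
          ∏ v, H v = H a * (H b * ∏ v ∈ (Finset.univ.erase a).erase b, H v) := by
        intro H
        rw [Finset.mul_prod_erase (Finset.univ.erase a) H
          (Finset.mem_erase.mpr ⟨Ne.symm hab, Finset.mem_univ b⟩),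
          Finset.mul_prod_erase Finset.univ H (Finset.mem_univ a)]
      calc ∑' ψ : (↥(Finset.univ.biUnion A) → C), ∏ v, F v (extF _ ψ)
          = ∑' p : (↥((Finset.univ.biUnion A).erase e) → C) × C,
              ∏ v, F v (extF _ ((splitEquiv _ e he).symm p)) :=
            (Equiv.tsum_eq (splitEquiv _ e he).symm _).symm
        _ = ∑' (ψ : ↥((Finset.univ.biUnion A).erase e) → C), ∑' (c : C),
              ∏ v, F v (Function.update (extF ((Finset.univ.biUnion A).erase e) ψ) e c) := by
            rw [ENNReal.tsum_prod']
            exact tsum_congr fun ψ => tsum_congr fun c => by rw [extF_split]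
        _ ≤ ∑' (ψ : ↥((Finset.univ.biUnion A).erase e) → C), ∏ v, G v (extF _ ψ) := by
            refine ENNReal.tsum_le_tsum fun ψ => ?_
            have hrest : ∀ c : C, ∀ v ∈ (Finset.univ.erase a).erase b,
                F v (Function.update (extF ((Finset.univ.biUnion A).erase e) ψ) e c)
                  = F v (extF ((Finset.univ.biUnion A).erase e) ψ) := by
              intro c v hv
              have hv1 : v ≠ b := (Finset.mem_erase.mp hv).1
              have hv2 : v ≠ a := (Finset.mem_erase.mp (Finset.mem_of_mem_erase hv)).1
              have hev : e ∉ A v := fun h => by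
                rcases (hmem v).mp h with h' | h' <;> [exact hv2 h'; exact hv1 h']
              refine hdep v _ _ fun e' he' => ?_
              rw [Function.update_of_ne (fun h : e' = e => hev (h ▸ he'))]
            calc ∑' c : C, ∏ v, F v (Function.update (extF _ ψ) e c)
                = ∑' c : C, (F a (Function.update (extF _ ψ) e c)
                    * F b (Function.update (extF _ ψ) e c))
                    * ∏ v ∈ (Finset.univ.erase a).erase b, F v (extF _ ψ) := by
                  refine tsum_congr fun c => ?_
                  rw [hsplitprod (fun v => F v (Function.update (extF _ ψ) e c)),
                    Finset.prod_congr rfl (hrest c), mul_assoc]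
              _ = (∑' c : C, F a (Function.update (extF _ ψ) e c)
                    * F b (Function.update (extF _ ψ) e c))
                    * ∏ v ∈ (Finset.univ.erase a).erase b, F v (extF _ ψ) :=
                  ENNReal.tsum_mul_right
              _ ≤ ((∑' c : C, F a (Function.update (extF _ ψ) e c) ^ (2:ℝ)) ^ (1/2:ℝ)
                    * (∑' c : C, F b (Function.update (extF _ ψ) e c) ^ (2:ℝ)) ^ (1/2:ℝ))
                    * ∏ v ∈ (Finset.univ.erase a).erase b, F v (extF _ ψ) :=
                  mul_le_mul_left (aux_tsum_cs _ _) _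
              _ = ∏ v, G v (extF _ ψ) := by
                  rw [hsplitprod (fun v => G v (extF _ ψ))]
                  have hGa : G a (extF ((Finset.univ.biUnion A).erase e) ψ)
                      = (∑' c : C, F a (Function.update (extF _ ψ) e c) ^ (2:ℝ)) ^ (1/2:ℝ) := by
                    simp only [hG, Gfun, if_pos hea]
                  have hGb : G b (extF ((Finset.univ.biUnion A).erase e) ψ)
                      = (∑' c : C, F b (Function.update (extF _ ψ) e c) ^ (2:ℝ)) ^ (1/2:ℝ) := by
                    simp only [hG, Gfun, if_pos heb]
                  have hGrest : ∀ v ∈ (Finset.univ.erase a).erase b,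
                      G v (extF ((Finset.univ.biUnion A).erase e) ψ)
                        = F v (extF ((Finset.univ.biUnion A).erase e) ψ) := by
                    intro v hv
                    have hv1 : v ≠ b := (Finset.mem_erase.mp hv).1
                    have hv2 : v ≠ a := (Finset.mem_erase.mp (Finset.mem_of_mem_erase hv)).1
                    have hev : e ∉ A v := fun h => by
                      rcases (hmem v).mp h with h' | h' <;> [exact hv2 h'; exact hv1 h']
                    simp only [hG, Gfun, if_neg hev]
                  rw [hGa, hGb, Finset.prod_congr rfl hGrest, mul_assoc]
        _ = ∑' ψ : (↥(Finset.univ.biUnion A') → C), ∏ v, G v (extF _ ψ) := by rw [hUe]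
        _ ≤ ∏ v, (∑' ψ : (↥(A' v) → C), G v (extF _ ψ) ^ (2:ℝ)) ^ (1/2 : ℝ) :=
            ih G A' hdep' hcov' hlt'
        _ = ∏ v, (∑' ψ : (↥(A v) → C), F v (extF _ ψ) ^ (2:ℝ)) ^ (1/2 : ℝ) :=
            Finset.prod_congr rfl fun v _ => by rw [hN v]

end Stmt17Aux

noncomputable section

/-- Let `F` be a finite loopless graph (multiple edges allowed, encoded
by an edge type `E` with an endpoint map `ends` to non-diagonal unordered pairs, and with
`δ(v)` an enumeration of the `d v = deg(v)` edges incident with `v`) and let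
`h_v ∈ H_{deg v}^{S_{deg v}}` for each vertex `v`.  Then the sum
`Σ_{φ:E(F)→C} ∏_{v∈V(F)} h_v(φ(δ(v)))` converges absolutely, and its absolute value is at
most `∏_{v∈V(F)} ‖h_v‖`; in particular `π_F(h)` is a well-defined real number. -/
theorem stmt17 (C : Type) {V : Type} [Fintype V]
    (E : Type) [Fintype E] (ends : E → Sym2 V) (hloopless : ∀ e, ¬ (ends e).IsDiag)
    (d : V → ℕ) (δ : ∀ v : V, Fin (d v) → E)
    (hinj : ∀ v, Function.Injective (δ v))
    (hrange : ∀ (v : V) (e : E), v ∈ ends e ↔ e ∈ Set.range (δ v))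
    (h : ∀ v : V, Hk C (d v)) (hinv : ∀ v, SkInv (h v)) :
    Summable (fun φ : E → C => |∏ v : V, h v (fun i => φ (δ v i))|) ∧
    |∑' φ : E → C, ∏ v : V, h v (fun i => φ (δ v i))| ≤ ∏ v : V, ‖h v‖ := by
  classical
  by_cases hC : Nonempty C
  swap
  · -- C is empty
    haveI hCE : IsEmpty C := not_nonempty_iff.mp hC
    by_cases hE : Nonempty E
    · haveI : IsEmpty (E → C) := ⟨fun φ => hCE.false (φ hE.some)⟩
      refine ⟨summable_empty, ?_⟩
      rw [tsum_empty]
      simpa using Finset.prod_nonneg (fun v (_ : v ∈ Finset.univ) => norm_nonneg (h v))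
    · haveI hEe : IsEmpty E := not_nonempty_iff.mp hE
      haveI : Unique (E → C) := Pi.uniqueOfIsEmpty _
      haveI : Finite (E → C) := Finite.of_subsingleton
      refine ⟨Summable.of_finite, ?_⟩
      rw [tsum_eq_single (default : E → C)
        (fun b hb => absurd (Subsingleton.elim b default) hb), Finset.abs_prod]
      refine Finset.prod_le_prod (fun v _ => abs_nonneg _) (fun v _ => ?_)
      rw [← Real.norm_eq_abs]
      exact lp.norm_apply_le_norm two_ne_zero (h v) _
  haveI := hC
  -- set up the data for the key lemma
  set F : V → (E → C) → ℝ≥0∞ :=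
    fun v φ => ((‖h v (fun i => φ (δ v i))‖₊ : ℝ≥0) : ℝ≥0∞) with hF
  set A : V → Finset E := fun v => Finset.univ.image (δ v) with hA
  have hAiff : ∀ (v : V) (e : E), e ∈ A v ↔ v ∈ ends e := by
    intro v e
    rw [hrange]
    simp [hA, Set.mem_range, Finset.mem_image]
  have hdep : ∀ v (φ ψ : E → C), (∀ e ∈ A v, φ e = ψ e) → F v φ = F v ψ := by
    intro v φ ψ hag
    simp only [hF]
    congr 1
    have : (fun i => φ (δ v i)) = fun i => ψ (δ v i) :=
      funext fun i => hag _ (Finset.mem_image_of_mem _ (Finset.mem_univ i))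
    rw [this]
  have hUuniv : Finset.univ.biUnion A = (Finset.univ : Finset E) := by
    refine Finset.eq_univ_iff_forall.mpr fun e => Finset.mem_biUnion.mpr ?_
    exact ⟨_, Finset.mem_univ _, (hAiff _ e).mpr (Sym2.out_fst_mem (ends e))⟩
  have hcov : ∀ e : E, e ∈ Finset.univ.biUnion A →
      (Finset.univ.filter (fun v => e ∈ A v)).card = 2 := by
    intro e _
    have hxy : Sym2.mk (Quot.out (ends e)).1 (Quot.out (ends e)).2 = ends e := (ends e).out_eq
    set x := (Quot.out (ends e)).1 with hx
    set y := (Quot.out (ends e)).2 with hy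
    have hxny : x ≠ y := by
      intro hcon
      apply hloopless e
      rw [← hxy]
      exact Sym2.mk_isDiag_iff.mpr hcon
    have hfil : Finset.univ.filter (fun v => e ∈ A v) = {x, y} := by
      ext v
      simp only [Finset.mem_filter, Finset.mem_univ, true_and, Finset.mem_insert,
        Finset.mem_singleton]
      rw [hAiff v e, ← hxy]
      exact Sym2.mem_iff
    rw [hfil]
    exact Finset.card_pair hxny
  have hkey := key (∑ v, (A v).card + 1) F A hdep hcov (lt_add_one _)
  rw [hUuniv] at hkey
  -- identify the left-hand side
  have hL : (∑' ψ : (↥(Finset.univ : Finset E) → C), ∏ v, F v (extF _ ψ))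
      = ∑' φ : E → C, ∏ v, F v φ := by
    rw [← Equiv.tsum_eq (Equiv.arrowCongr (Equiv.subtypeUnivEquiv
      (fun x : E => Finset.mem_univ x)) (Equiv.refl C)).symm (fun ψ => ∏ v, F v (extF _ ψ))]
    refine tsum_congr fun φ => Finset.prod_congr rfl fun v _ => congrArg (F v) ?_
    funext x
    simp [extF, Equiv.subtypeUnivEquiv]
  rw [hL] at hkey
  -- identify the right-hand side
  have hR : ∀ v : V, (∑' ψ : (↥(A v) → C), F v (extF _ ψ) ^ (2:ℝ)) ^ (1/2 : ℝ)
      = ((‖h v‖₊ : ℝ≥0) : ℝ≥0∞) := by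
    intro v
    let e1 : Fin (d v) ≃ ↥(A v) := Equiv.ofBijective
      (fun i => ⟨δ v i, Finset.mem_image_of_mem _ (Finset.mem_univ i)⟩)
      ⟨fun i j hij => hinj v (Subtype.ext_iff.mp hij), by
        rintro ⟨e, he⟩
        obtain ⟨i, -, hi⟩ := Finset.mem_image.mp he
        exact ⟨i, Subtype.ext hi⟩⟩
    have h1 : (∑' ψ : (↥(A v) → C), F v (extF _ ψ) ^ (2:ℝ))
        = ∑' c : Fin (d v) → C, ((‖h v c‖₊ : ℝ≥0) : ℝ≥0∞) ^ (2:ℝ) := by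
      rw [← Equiv.tsum_eq (Equiv.arrowCongr e1 (Equiv.refl C))
        (fun ψ => F v (extF _ ψ) ^ (2:ℝ))]
      refine tsum_congr fun c => ?_
      congr 1
      simp only [hF]
      congr 1
      have : (fun i => extF (A v) ((Equiv.arrowCongr e1 (Equiv.refl C)) c) (δ v i)) = c := by
        funext i
        have hmem : δ v i ∈ A v := Finset.mem_image_of_mem _ (Finset.mem_univ i)
        have : extF (A v) ((Equiv.arrowCongr e1 (Equiv.refl C)) c) (δ v i)
            = ((Equiv.arrowCongr e1 (Equiv.refl C)) c) ⟨δ v i, hmem⟩ := dif_pos hmem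
        rw [this]
        simp only [Equiv.arrowCongr_apply, Equiv.refl_apply, Function.comp_apply]
        rw [show (⟨δ v i, hmem⟩ : ↥(A v)) = e1 i from Subtype.ext rfl,
          e1.symm_apply_apply]
      rw [this]
    rw [h1]
    -- now compute with the ℓ² norm
    have hsum : Summable (fun c : Fin (d v) → C => ‖h v c‖₊ ^ (2:ℝ)) := by
      rw [← NNReal.summable_coe]
      have := Memℓp.summable (p := 2) (by norm_num) (lp.memℓp (h v))
      simpa [NNReal.coe_rpow, coe_nnnorm] using this
    calc (∑' c : Fin (d v) → C, ((‖h v c‖₊ : ℝ≥0) : ℝ≥0∞) ^ (2:ℝ)) ^ (1/2 : ℝ)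
        = ((↑(∑' c : Fin (d v) → C, ‖h v c‖₊ ^ (2:ℝ)) : ℝ≥0∞)) ^ (1/2 : ℝ) := by
          rw [ENNReal.coe_tsum hsum]
          congr 1
          exact tsum_congr fun c => (ENNReal.coe_rpow_of_nonneg _ (by norm_num)).symm
      _ = ((((∑' c : Fin (d v) → C, ‖h v c‖₊ ^ (2:ℝ)) ^ (1/2 : ℝ) : ℝ≥0)) : ℝ≥0∞) :=
          (ENNReal.coe_rpow_of_nonneg _ (by norm_num)).symm
      _ = ((‖h v‖₊ : ℝ≥0) : ℝ≥0∞) := by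
          congr 1
          apply NNReal.coe_injective
          rw [NNReal.coe_rpow, NNReal.coe_tsum, coe_nnnorm]
          rw [lp.norm_eq_tsum_rpow (by norm_num) (h v)]
          simp [NNReal.coe_rpow, coe_nnnorm]
  have hmain : (∑' φ : E → C, ∏ v, F v φ) ≤ ((∏ v, ‖h v‖₊ : ℝ≥0) : ℝ≥0∞) := by
    refine le_trans hkey (le_of_eq ?_)
    rw [ENNReal.coe_finset_prod]
    exact Finset.prod_congr rfl fun v _ => hR v
  have hFprod : ∀ φ : E → C,
      ((‖∏ v, h v (fun i => φ (δ v i))‖₊ : ℝ≥0) : ℝ≥0∞) = ∏ v, F v φ := by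
    intro φ
    rw [nnnorm_prod, ENNReal.coe_finset_prod]
  have hne : (∑' φ : E → C, ((‖∏ v, h v (fun i => φ (δ v i))‖₊ : ℝ≥0) : ℝ≥0∞)) ≠ ⊤ := by
    rw [tsum_congr hFprod]
    exact (lt_of_le_of_lt hmain ENNReal.coe_lt_top).ne
  have hS : Summable fun φ : E → C => ‖∏ v, h v (fun i => φ (δ v i))‖₊ :=
    ENNReal.tsum_coe_ne_top_iff_summable.mp hne
  have hSr : Summable (fun φ : E → C => |∏ v : V, h v (fun i => φ (δ v i))|) :=
    (summable_congr fun φ => by rw [coe_nnnorm, Real.norm_eq_abs]).mp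
      (NNReal.summable_coe.mpr hS)
  refine ⟨hSr, ?_⟩
  have habs : |∑' φ : E → C, ∏ v : V, h v (fun i => φ (δ v i))|
      ≤ ∑' φ : E → C, |∏ v : V, h v (fun i => φ (δ v i))| := by
    rw [← Real.norm_eq_abs]
    refine le_trans (norm_tsum_le_tsum_norm ?_) (le_of_eq ?_)
    · exact (summable_congr fun φ => Real.norm_eq_abs _).mpr hSr
    · exact tsum_congr fun φ => Real.norm_eq_abs _
  refine le_trans habs ?_
  -- transfer the ENNReal bound to ℝ
  have hnn : (∑' φ : E → C, ‖∏ v, h v (fun i => φ (δ v i))‖₊) ≤ ∏ v, ‖h v‖₊ := by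
    rw [← ENNReal.coe_le_coe, ENNReal.coe_tsum hS, tsum_congr hFprod]
    exact hmain
  have := NNReal.coe_le_coe.mpr hnn
  rw [NNReal.coe_tsum, NNReal.coe_prod] at this
  calc ∑' φ : E → C, |∏ v : V, h v (fun i => φ (δ v i))|
      = ∑' φ : E → C, ((‖∏ v, h v (fun i => φ (δ v i))‖₊ : ℝ)) :=
        tsum_congr fun φ => by rw [coe_nnnorm, Real.norm_eq_abs]
    _ ≤ ∏ v, ((‖h v‖₊ : ℝ)) := this
    _ = ∏ v, ‖h v‖ := Finset.prod_congr rfl fun v _ => coe_nnnorm _
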